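/- arXiv:2202.11258 — 3 statements merged into one kernel-verified Lean document; each statement's English description precedes it below -/
import Mathlib

section
/- Let n ∈ [N], and let π and ν be partitions of [N] with n contained in block A of π and in block B of ν. Let π₋ₙ and ν₋ₙ denote the partitions of [N]∖{n} obtained by deleting n from its block (removing the block if it becomes empty). Then d(π,ν) = d(π₋ₙ, ν₋ₙ) + 2(|A| + |B| − 2|A ∩ B|). -/
open Finset

/-- The distance `d(π,ν) = Σ_{A∈π}|A|² + Σ_{B∈ν}|B|² − 2 Σ_{A∈π,B∈ν}|A∩B|²` between
partitions of finite sets. -/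
def partitionDist {α : Type*} [DecidableEq α] {s t : Finset α}
    (π : Finpartition s) (ν : Finpartition t) : ℤ :=
  ∑ A ∈ π.parts, (A.card : ℤ) ^ 2 + ∑ B ∈ ν.parts, (B.card : ℤ) ^ 2
    - 2 * ∑ A ∈ π.parts, ∑ B ∈ ν.parts, ((A ∩ B).card : ℤ) ^ 2

lemma sum_avoid_singleton {N : ℕ} (π : Finpartition (univ : Finset (Fin N))) (n : Fin N)
    (f : Finset (Fin N) → ℤ) (hf : f ∅ = 0) :
    ∑ C ∈ (π.avoid {n}).parts, f C = ∑ C ∈ π.parts, f (C \ {n}) := by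
  have hparts : (π.avoid {n}).parts = (π.parts.image (· \ ({n} : Finset (Fin N)))).erase ∅ := by
    rfl
  rw [hparts, Finset.sum_erase _ hf, Finset.sum_image]
  intro C hC D hD h
  beta_reduce at h
  by_cases hnC : n ∈ C <;> by_cases hnD : n ∈ D
  · exact π.eq_of_mem_parts hC hD hnC hnD
  · -- D = D \ {n} = C \ {n} ⊆ C
    have hsub : D ⊆ C := by
      intro a ha
      have : a ∈ D \ {n} := by simp [ha]; rintro rfl; exact hnD ha
      rw [← h] at this
      exact (mem_sdiff.1 this).1
    obtain ⟨a, ha⟩ := π.nonempty_of_mem_parts hD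
    exact π.eq_of_mem_parts hC hD (hsub ha) ha
  · have hsub : C ⊆ D := by
      intro a ha
      have : a ∈ C \ {n} := by simp [ha]; rintro rfl; exact hnC ha
      rw [h] at this
      exact (mem_sdiff.1 this).1
    obtain ⟨a, ha⟩ := π.nonempty_of_mem_parts hC
    exact π.eq_of_mem_parts hC hD ha (hsub ha)
  · have h1 : C \ {n} = C := sdiff_eq_self_of_disjoint (by simpa using hnC)
    have h2 : D \ {n} = D := sdiff_eq_self_of_disjoint (by simpa using hnD)
    rwa [h1, h2] at h

lemma sum_delete {N : ℕ} (π : Finpartition (univ : Finset (Fin N))) (n : Fin N)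
    (A : Finset (Fin N)) (hA : A ∈ π.parts) (hnA : n ∈ A) (f : Finset (Fin N) → ℤ) :
    ∑ C ∈ π.parts, f (C \ {n}) = ∑ C ∈ π.parts, f C - f A + f (A \ {n}) := by
  rw [← Finset.sum_erase_add _ _ hA, ← Finset.sum_erase_add _ (fun C => f C) hA]
  have : ∀ C ∈ π.parts.erase A, f (C \ {n}) = f C := by
    intro C hC
    have hCA : C ≠ A := (Finset.mem_erase.1 hC).1
    have hC' : C ∈ π.parts := (Finset.mem_erase.1 hC).2
    have hnC : n ∉ C := fun hn => hCA (π.eq_of_mem_parts hC' hA hn hnA)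
    rw [sdiff_eq_self_of_disjoint (by simpa using hnC)]
  rw [Finset.sum_congr rfl this]
  ring

/-- Deleting a point `n` lying in block `A` of `π` and block `B` of `ν` changes the
distance by exactly `2(|A| + |B| − 2|A∩B|)`:
`d(π,ν) = d(π₋ₙ, ν₋ₙ) + 2(|A| + |B| − 2|A∩B|)`. -/
theorem partitionDist_delete_point (N : ℕ) (n : Fin N)
    (π ν : Finpartition (univ : Finset (Fin N))) (A B : Finset (Fin N))
    (hA : A ∈ π.parts) (hnA : n ∈ A) (hB : B ∈ ν.parts) (hnB : n ∈ B) :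
    partitionDist π ν =
      partitionDist (π.avoid {n}) (ν.avoid {n})
        + 2 * ((A.card : ℤ) + (B.card : ℤ) - 2 * ((A ∩ B).card : ℤ)) := by
  have cardA : ((A \ {n}).card : ℤ) = (A.card : ℤ) - 1 := by
    rw [Finset.card_sdiff_of_subset (by simpa using hnA)]
    have := Finset.card_pos.2 ⟨n, hnA⟩
    simp only [Finset.card_singleton] at *
    omega
  have cardB : ((B \ {n}).card : ℤ) = (B.card : ℤ) - 1 := by
    rw [Finset.card_sdiff_of_subset (by simpa using hnB)]
    have := Finset.card_pos.2 ⟨n, hnB⟩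
    simp only [Finset.card_singleton] at *
    omega
  have cardAB : (((A ∩ B) \ {n}).card : ℤ) = ((A ∩ B).card : ℤ) - 1 := by
    have hn : n ∈ A ∩ B := Finset.mem_inter.2 ⟨hnA, hnB⟩
    rw [Finset.card_sdiff_of_subset (by simpa using hn)]
    have := Finset.card_pos.2 ⟨n, hn⟩
    simp only [Finset.card_singleton] at *
    omega
  have h1 : ∑ C ∈ (π.avoid {n}).parts, (C.card : ℤ) ^ 2
      = ∑ C ∈ π.parts, (C.card : ℤ) ^ 2 - (A.card : ℤ) ^ 2 + ((A.card : ℤ) - 1) ^ 2 := by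
    rw [sum_avoid_singleton π n _ (by simp), sum_delete π n A hA hnA (fun C => ((C.card : ℤ)) ^ 2), cardA]
  have h2 : ∑ C ∈ (ν.avoid {n}).parts, (C.card : ℤ) ^ 2
      = ∑ C ∈ ν.parts, (C.card : ℤ) ^ 2 - (B.card : ℤ) ^ 2 + ((B.card : ℤ) - 1) ^ 2 := by
    rw [sum_avoid_singleton ν n _ (by simp), sum_delete ν n B hB hnB (fun C => ((C.card : ℤ)) ^ 2), cardB]
  have h3 : ∑ C ∈ (π.avoid {n}).parts, ∑ D ∈ (ν.avoid {n}).parts, ((C ∩ D).card : ℤ) ^ 2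
      = ∑ C ∈ π.parts, ∑ D ∈ ν.parts, ((C ∩ D).card : ℤ) ^ 2
        - ((A ∩ B).card : ℤ) ^ 2 + (((A ∩ B).card : ℤ) - 1) ^ 2 := by
    have step1 : ∑ C ∈ (π.avoid {n}).parts, ∑ D ∈ (ν.avoid {n}).parts, ((C ∩ D).card : ℤ) ^ 2
        = ∑ C ∈ π.parts, ∑ D ∈ ν.parts, (((C ∩ D) \ {n}).card : ℤ) ^ 2 := by
      rw [sum_avoid_singleton π n _ (by simp)]
      refine Finset.sum_congr rfl fun C _ => ?_
      rw [sum_avoid_singleton ν n (fun D => (((C \ {n}) ∩ D).card : ℤ) ^ 2) (by simp)]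
      refine Finset.sum_congr rfl fun D _ => ?_
      have : (C \ {n}) ∩ (D \ {n}) = (C ∩ D) \ {n} := by
        ext a
        simp only [mem_inter, mem_sdiff, mem_singleton]
        tauto
      rw [this]
    rw [step1, ← Finset.sum_product', ← Finset.sum_product']
    have hABmem : (A, B) ∈ π.parts ×ˢ ν.parts := Finset.mem_product.2 ⟨hA, hB⟩
    rw [← Finset.sum_erase_add _ _ hABmem, ← Finset.sum_erase_add _
      (fun p : Finset (Fin N) × Finset (Fin N) => ((p.1 ∩ p.2).card : ℤ) ^ 2) hABmem]
    have hcong : ∀ p ∈ (π.parts ×ˢ ν.parts).erase (A, B),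
        (((p.1 ∩ p.2) \ {n}).card : ℤ) ^ 2 = ((p.1 ∩ p.2).card : ℤ) ^ 2 := by
      rintro ⟨C, D⟩ hp
      have hne := (Finset.mem_erase.1 hp).1
      obtain ⟨hC, hD⟩ := Finset.mem_product.1 (Finset.mem_erase.1 hp).2
      have hn : n ∉ C ∩ D := by
        intro hn
        obtain ⟨h1, h2⟩ := Finset.mem_inter.1 hn
        exact hne (Prod.ext (π.eq_of_mem_parts hC hA h1 hnA) (ν.eq_of_mem_parts hD hB h2 hnB))
      rw [sdiff_eq_self_of_disjoint (by simpa using hn)]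
    rw [Finset.sum_congr rfl hcong, cardAB]
    ring
  rw [partitionDist, partitionDist, h1, h2, h3]
  ring
end

section
/- Call two partitions π, π' of [N] related at site n if their restrictions to [N]∖{n} (obtained by deleting n from its block, removing the block if it becomes empty) are equal. Let 𝟙 denote the partition of [N] with a single block. Then: (i) for every partition X of [N] there exists a sequence of partitions π⁰ = X, π¹, …, π^N = 𝟙 such that π^n is related to π^{n−1} at site n for each n = 1,…,N; and (ii) for every partition X of [N] there exists a sequence π⁰ = 𝟙, π¹, …, π^N = X such that π^n is related to π^{n−1} at site n for each n = 1,…,N. -/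
open Finset

/-- Two partitions of `[N]` are related at site `n` if their restrictions to `[N]∖{n}`
(deleting `n` from its block) coincide. -/
def RelatedAt {N : ℕ} (n : Fin N) (π π' : Finpartition (univ : Finset (Fin N))) : Prop :=
  π.avoid {n} = π'.avoid {n}

section Aux

variable {α : Type*} [Fintype α] [DecidableEq α]

lemma gibbs_mem_avoid_of_mem (X P : Finpartition (univ : Finset α)) (B : Finset α) (i : α)
    (hP : P.parts = insert B (X.avoid B).parts) (hi : i ∈ B) (x : Finset α) :
    x ∈ (P.avoid {i}).parts ↔ x ≠ ∅ ∧ (x = B \ {i} ∨ x ∈ (X.avoid B).parts) := by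
  rw [Finpartition.mem_avoid, hP]
  constructor
  · rintro ⟨d, hd, hd1, rfl⟩
    rw [mem_insert] at hd
    rcases hd with rfl | hd
    · exact ⟨fun h => hd1 (sdiff_eq_bot_iff.1 h), Or.inl rfl⟩
    · have hdB : d ≤ univ \ B := (X.avoid B).le hd
      have hid : i ∉ d := fun hid => (mem_sdiff.1 (hdB hid)).2 hi
      have hdd : d \ {i} = d := sdiff_eq_self_of_disjoint (by simpa using hid)
      rw [hdd]
      exact ⟨(X.avoid B).ne_bot hd, Or.inr hd⟩
  · rintro ⟨hx, rfl | hx'⟩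
    · exact ⟨B, mem_insert_self _ _, fun h => hx (sdiff_eq_bot_iff.2 h), rfl⟩
    · have hdB : x ≤ univ \ B := (X.avoid B).le hx'
      have hix : i ∉ x := fun hid => (mem_sdiff.1 (hdB hid)).2 hi
      have hdd : x \ {i} = x := sdiff_eq_self_of_disjoint (by simpa using hix)
      refine ⟨x, mem_insert_of_mem hx', fun h => hx ?_, hdd⟩
      rw [← hdd]; exact sdiff_eq_bot_iff.2 h

lemma gibbs_mem_avoid_of_not_mem (X P : Finpartition (univ : Finset α)) (B : Finset α) (i : α)
    (hP : P.parts = insert B (X.avoid B).parts) (hi : i ∉ B) (x : Finset α) :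
    x ∈ (P.avoid {i}).parts ↔ x ≠ ∅ ∧ (x = B ∨ x ∈ (X.avoid (insert i B)).parts) := by
  have hBi : B \ {i} = B := sdiff_eq_self_of_disjoint (by simpa using hi)
  have hins : B ⊔ {i} = insert i B := by ext a; simp [or_comm]
  rw [Finpartition.mem_avoid, hP]
  constructor
  · rintro ⟨d, hd, hd1, rfl⟩
    rw [mem_insert] at hd
    rcases hd with rfl | hd
    · rw [hBi]
      exact ⟨fun h => hd1 (by rw [← hBi] at h; exact sdiff_eq_bot_iff.1 h), Or.inl rfl⟩
    · obtain ⟨e, he, heB, rfl⟩ := (Finpartition.mem_avoid X).1 hd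
      refine ⟨fun h => hd1 (sdiff_eq_bot_iff.1 h), Or.inr ?_⟩
      rw [sdiff_sdiff, hins]
      exact (Finpartition.mem_avoid X).2
        ⟨e, he, fun h => hd1 (sdiff_le_iff.2 (by rwa [hins])), rfl⟩
  · rintro ⟨hx, rfl | hx'⟩
    · exact ⟨x, mem_insert_self _ _,
        fun h => hx (by rw [← hBi]; exact sdiff_eq_bot_iff.2 h), hBi⟩
    · obtain ⟨e, he, heiB, rfl⟩ := (Finpartition.mem_avoid X).1 hx'
      have heB : ¬ e ≤ B := fun h => heiB (h.trans (subset_insert _ _))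
      refine ⟨e \ B, mem_insert_of_mem ((Finpartition.mem_avoid X).2 ⟨e, he, heB, rfl⟩),
        fun h => heiB (by rw [← hins]; exact sdiff_le_iff.1 h), ?_⟩
      rw [sdiff_sdiff, hins]

lemma gibbs_avoid_univ_parts (X : Finpartition (univ : Finset α)) :
    (X.avoid univ).parts = ∅ := by
  ext x
  simp only [Finpartition.mem_avoid, notMem_empty, iff_false]
  rintro ⟨d, hd, hdu, -⟩
  exact hdu (X.le hd)

end Aux

private def Slt (N n : ℕ) : Finset (Fin N) := univ.filter fun j => j.val < n

private def Tge (N n : ℕ) : Finset (Fin N) := univ.filter fun j => n ≤ j.val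

private lemma mem_Slt {N n : ℕ} {j : Fin N} : j ∈ Slt N n ↔ j.val < n := by simp [Slt]

private lemma mem_Tge {N n : ℕ} {j : Fin N} : j ∈ Tge N n ↔ n ≤ j.val := by simp [Tge]

private lemma Slt_le_univ {N n : ℕ} : Slt N n ≤ (univ : Finset (Fin N)) :=
  fun x _ => mem_univ x

private lemma Tge_le_univ {N n : ℕ} : Tge N n ≤ (univ : Finset (Fin N)) :=
  fun x _ => mem_univ x

/-- The forward sweep: block `{0,…,n-1}` together with `X` restricted to the rest. -/
private def fseq (N : ℕ) (X : Finpartition (univ : Finset (Fin N))) (hN : 0 < N) (n : ℕ) :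
    Finpartition (univ : Finset (Fin N)) :=
  if h : n = 0 then X else
    (X.avoid (Slt N n)).extend
      (ne_empty_of_mem (mem_Slt.2 (Nat.pos_of_ne_zero h) : (⟨0, hN⟩ : Fin N) ∈ _))
      sdiff_disjoint (sdiff_sup_cancel Slt_le_univ)

/-- The backward sweep: `X` restricted to `{0,…,n-1}` together with block `{n,…,N-1}`. -/
private def gseq (N : ℕ) (X : Finpartition (univ : Finset (Fin N))) (n : ℕ) :
    Finpartition (univ : Finset (Fin N)) :=
  if h : n < N then
    (X.avoid (Tge N n)).extend
      (ne_empty_of_mem (mem_Tge.2 le_rfl : (⟨n, h⟩ : Fin N) ∈ _))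
      sdiff_disjoint (sdiff_sup_cancel Tge_le_univ)
  else X

/-- Any partition `X` of `[N]` can be transformed into the one-block partition `𝟙` by a
single Gibbs sweep (a sequence of `N` moves, the `n`-th of which only reassigns site `n`),
and conversely `𝟙` can be transformed into `X` by a single sweep. -/
theorem gibbs_sweep_reaches_one_block (N : ℕ) (hN : 0 < N)
    (one : Finpartition (univ : Finset (Fin N))) (hone : one.parts = {univ})
    (X : Finpartition (univ : Finset (Fin N))) :
    (∃ f : ℕ → Finpartition (univ : Finset (Fin N)),
      f 0 = X ∧ f N = one ∧ ∀ i : Fin N, RelatedAt i (f (i.val + 1)) (f i.val)) ∧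
    (∃ g : ℕ → Finpartition (univ : Finset (Fin N)),
      g 0 = one ∧ g N = X ∧ ∀ i : Fin N, RelatedAt i (g (i.val + 1)) (g i.val)) := by
  constructor
  · refine ⟨fseq N X hN, by simp [fseq], ?_, ?_⟩
    · apply Finpartition.ext
      rw [fseq, dif_neg hN.ne', Finpartition.extend_parts]
      have hSN : Slt N N = univ := by ext j; simp [mem_Slt, j.isLt]
      rw [hSN, gibbs_avoid_univ_parts, hone]
      rfl
    · rintro ⟨n, hnN⟩
      set i : Fin N := ⟨n, hnN⟩ with hidef
      have hiS : i ∉ Slt N n := by simp [mem_Slt, hidef]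
      have hiS1 : i ∈ Slt N (n + 1) := mem_Slt.2 (Nat.lt_succ_self n)
      have hins : insert i (Slt N n) = Slt N (n + 1) := by
        ext j; simp only [mem_insert, mem_Slt, Fin.ext_iff, hidef, Fin.val_mk]; omega
      have hsd : Slt N (n + 1) \ {i} = Slt N n := by
        ext j
        simp only [mem_sdiff, mem_Slt, mem_singleton, Fin.ext_iff, hidef, Fin.val_mk]
        omega
      unfold RelatedAt
      apply Finpartition.ext
      ext x
      rw [gibbs_mem_avoid_of_mem X (fseq N X hN (n+1)) (Slt N (n + 1)) i
        (by rw [fseq, dif_neg (Nat.succ_ne_zero n), Finpartition.extend_parts]) hiS1, hsd]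
      rcases Nat.eq_zero_or_pos n with h0 | hpos
      · subst h0
        have hS0 : Slt N 0 = ∅ := by ext j; simp [mem_Slt]
        have hS1 : Slt N 1 = {i} := by rw [← hins, hS0]; simp
        rw [show fseq N X hN 0 = X by simp [fseq], hS0, hS1]
        constructor
        · rintro ⟨h1, h2⟩; exact h2.resolve_left h1
        · intro h; exact ⟨(X.avoid {i}).ne_bot h, Or.inr h⟩
      · rw [gibbs_mem_avoid_of_not_mem X (fseq N X hN n) (Slt N n) i
          (by rw [fseq, dif_neg hpos.ne', Finpartition.extend_parts]) hiS, hins]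
  · refine ⟨gseq N X, ?_, by simp [gseq], ?_⟩
    · apply Finpartition.ext
      rw [gseq, dif_pos hN, Finpartition.extend_parts]
      have hT0 : Tge N 0 = univ := by ext j; simp [mem_Tge]
      rw [hT0, gibbs_avoid_univ_parts, hone]
      rfl
    · rintro ⟨n, hnN⟩
      set i : Fin N := ⟨n, hnN⟩ with hidef
      have hiT : i ∈ Tge N n := mem_Tge.2 le_rfl
      have hiT1 : i ∉ Tge N (n + 1) := by simp [mem_Tge, hidef]
      have hins : insert i (Tge N (n + 1)) = Tge N n := by
        ext j; simp only [mem_insert, mem_Tge, Fin.ext_iff, hidef, Fin.val_mk]; omega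
      have hsd : Tge N n \ {i} = Tge N (n + 1) := by
        ext j
        simp only [mem_sdiff, mem_Tge, mem_singleton, Fin.ext_iff, hidef, Fin.val_mk]
        omega
      unfold RelatedAt
      apply Finpartition.ext
      ext x
      rw [gibbs_mem_avoid_of_mem X (gseq N X n) (Tge N n) i
        (by rw [gseq, dif_pos hnN, Finpartition.extend_parts]) hiT, hsd]
      rcases lt_or_ge (n + 1) N with hlt | hge
      · rw [gibbs_mem_avoid_of_not_mem X (gseq N X (n+1)) (Tge N (n + 1)) i
          (by rw [gseq, dif_pos hlt, Finpartition.extend_parts]) hiT1, hins]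
      · have hNeq : n + 1 = N := le_antisymm hnN hge
        have hTN : Tge N (n + 1) = ∅ := by
          ext j; simp only [mem_Tge, notMem_empty, iff_false]; omega
        have hTn : Tge N n = {i} := by rw [← hins, hTN]; simp
        rw [show gseq N X (n + 1) = X by rw [hNeq]; simp [gseq], hTN, hTn]
        constructor
        · intro h; exact ⟨(X.avoid {i}).ne_bot h, Or.inr h⟩
        · rintro ⟨h1, h2⟩; exact h2.resolve_left h1
end

section
/- Let p be a strictly positive probability mass function on the set of partitions of [N]. For each n ∈ [N], define the Gibbs kernel T_n by: T_n(π, π') = p(π') / Σ_{π'' : π''₋ₙ = π₋ₙ} p(π'') if π'₋ₙ = π₋ₙ, and T_n(π, π') = 0 otherwise. Let T = T_1 T_2 ⋯ T_N be the composition (one Gibbs sweep), and let 𝟙 denote the one-block partition of [N]. Then for every partition X of [N]: T(X, X) > 0, T(X, 𝟙) > 0, and T(𝟙, X) > 0. Consequently, T²(X, Y) > 0 for all partitions X, Y, so the Gibbs-sweep Markov chain is irreducible and aperiodic. -/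
open Finset
open scoped Classical

/-- The single-site Gibbs kernel `T_n` for a target pmf `p` on partitions of `[N]`:
`T_n(π,π') = p(π') / Σ_{π'' : π''₋ₙ = π₋ₙ} p(π'')` if `π'₋ₙ = π₋ₙ`, and `0` otherwise. -/
noncomputable def gibbsKernel {N : ℕ} (p : Finpartition (univ : Finset (Fin N)) → ℝ)
    (n : Fin N) :
    Matrix (Finpartition (univ : Finset (Fin N))) (Finpartition (univ : Finset (Fin N))) ℝ :=
  fun π π' =>
    if π'.avoid {n} = π.avoid {n} then
      p π' / ∑ π'' ∈ Finset.univ.filter (fun π'' => π''.avoid {n} = π.avoid {n}), p π''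
    else 0

/-- One Gibbs sweep: the composition `T = T_1 T_2 ⋯ T_N`. -/
noncomputable def gibbsSweep {N : ℕ}
    (p : Finpartition (univ : Finset (Fin N)) → ℝ) :
    Matrix (Finpartition (univ : Finset (Fin N))) (Finpartition (univ : Finset (Fin N))) ℝ :=
  (List.ofFn fun n : Fin N => gibbsKernel p n).prod

/-! ### Auxiliary lemmas -/

section Aux

variable {α : Type*} [DecidableEq α]

/-- Two finpartitions of `s` agreeing on all `part`s are equal. -/
lemma Finpartition.eq_of_part_eq {s : Finset α} (P Q : Finpartition s)
    (h : ∀ a ∈ s, P.part a = Q.part a) : P = Q := by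
  ext t
  constructor
  · intro ht
    obtain ⟨a, hat⟩ := P.nonempty_of_mem_parts ht
    have has : a ∈ s := P.le ht hat
    have := P.part_eq_of_mem ht hat
    rw [← this, h a has]
    exact Q.part_mem.2 has
  · intro ht
    obtain ⟨a, hat⟩ := Q.nonempty_of_mem_parts ht
    have has : a ∈ s := Q.le ht hat
    have := Q.part_eq_of_mem ht hat
    rw [← this, ← h a has]
    exact P.part_mem.2 has

lemma Finpartition.part_avoid_singleton {s : Finset α} (P : Finpartition s) (n a : α)
    (ha : a ∈ s \ {n}) : (P.avoid {n}).part a = P.part a \ {n} := by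
  have has : a ∈ s := (mem_sdiff.1 ha).1
  have han : a ≠ n := by simpa using (mem_sdiff.1 ha).2
  refine Finpartition.part_eq_of_mem _ ?_ ?_
  · rw [Finpartition.mem_avoid]
    refine ⟨P.part a, P.part_mem.2 has, ?_, rfl⟩
    intro hle
    have := hle (P.mem_part has)
    simp only [mem_singleton] at this
    exact han this
  · exact mem_sdiff.2 ⟨P.mem_part has, by simpa using han⟩

lemma avoid_eq_of_rel {α : Type*} [Fintype α] [DecidableEq α]
    (P Q : Finpartition (univ : Finset α)) (n : α)
    (h : ∀ i j : α, i ≠ n → j ≠ n → (j ∈ P.part i ↔ j ∈ Q.part i)) :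
    P.avoid {n} = Q.avoid {n} := by
  refine Finpartition.eq_of_part_eq _ _ fun a ha => ?_
  have han : a ≠ n := by simpa using (mem_sdiff.1 ha).2
  rw [Finpartition.part_avoid_singleton P n a ha, Finpartition.part_avoid_singleton Q n a ha]
  ext j
  simp only [mem_sdiff, mem_singleton]
  constructor
  · rintro ⟨hj, hjn⟩
    exact ⟨(h a j han hjn).1 hj, hjn⟩
  · rintro ⟨hj, hjn⟩
    exact ⟨(h a j han hjn).2 hj, hjn⟩

lemma mem_part_iff {α : Type*} [Fintype α] [DecidableEq α]
    (P : Finpartition (univ : Finset α)) (a j : α) :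
    j ∈ P.part a ↔ P.part a = P.part j := by
  constructor
  · intro hj
    exact (P.part_eq_of_mem (P.part_mem.2 (mem_univ a)) hj).symm
  · intro hj
    rw [hj]; exact P.mem_part (mem_univ j)

end Aux

section Chains

variable {N : ℕ}

/-- Merge chain setoid: below `k` everything merged, at/above `k` follow `X`. -/
def mergeRel (X : Finpartition (univ : Finset (Fin N))) (k : ℕ) : Setoid (Fin N) where
  r i j := (i.val < k ∧ j.val < k) ∨ (k ≤ i.val ∧ k ≤ j.val ∧ X.part i = X.part j)
  iseqv := by
    constructor
    · intro i
      rcases lt_or_ge i.val k with h | h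
      · exact Or.inl ⟨h, h⟩
      · exact Or.inr ⟨h, h, rfl⟩
    · rintro i j (⟨h1, h2⟩ | ⟨h1, h2, h3⟩)
      · exact Or.inl ⟨h2, h1⟩
      · exact Or.inr ⟨h2, h1, h3.symm⟩
    · rintro i j l (⟨h1, h2⟩ | ⟨h1, h2, h3⟩) (⟨g1, g2⟩ | ⟨g1, g2, g3⟩)
      · exact Or.inl ⟨h1, g2⟩
      · omega
      · omega
      · exact Or.inr ⟨h1, g2, h3.trans g3⟩

/-- Split chain setoid: below `k` follow `X`, at/above `k` everything merged. -/
def splitRel (X : Finpartition (univ : Finset (Fin N))) (k : ℕ) : Setoid (Fin N) where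
  r i j := (i.val < k ∧ j.val < k ∧ X.part i = X.part j) ∨ (k ≤ i.val ∧ k ≤ j.val)
  iseqv := by
    constructor
    · intro i
      rcases lt_or_ge i.val k with h | h
      · exact Or.inl ⟨h, h, rfl⟩
      · exact Or.inr ⟨h, h⟩
    · rintro i j (⟨h1, h2, h3⟩ | ⟨h1, h2⟩)
      · exact Or.inl ⟨h2, h1, h3.symm⟩
      · exact Or.inr ⟨h2, h1⟩
    · rintro i j l (⟨h1, h2, h3⟩ | ⟨h1, h2⟩) (⟨g1, g2, g3⟩ | ⟨g1, g2⟩)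
      · exact Or.inl ⟨h1, g2, h3.trans g3⟩
      · omega
      · omega
      · exact Or.inr ⟨h1, g2⟩

lemma mergeRel_zero (X : Finpartition (univ : Finset (Fin N))) :
    Finpartition.ofSetoid (mergeRel X 0) = X := by
  refine Finpartition.eq_of_part_eq _ _ fun a _ => ?_
  ext j
  rw [Finpartition.mem_part_ofSetoid_iff_rel, mem_part_iff X a j]
  show ((a.val < 0 ∧ _) ∨ _) ↔ _
  simp only [Nat.not_lt_zero, false_and, false_or, Nat.zero_le, true_and]

lemma splitRel_N (X : Finpartition (univ : Finset (Fin N))) :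
    Finpartition.ofSetoid (splitRel X N) = X := by
  refine Finpartition.eq_of_part_eq _ _ fun a _ => ?_
  ext j
  rw [Finpartition.mem_part_ofSetoid_iff_rel, mem_part_iff X a j]
  show ((a.val < N ∧ j.val < N ∧ _) ∨ (N ≤ a.val ∧ N ≤ j.val)) ↔ _
  have ha := a.isLt
  have hj := j.isLt
  constructor
  · rintro (⟨_, _, h⟩ | ⟨h1, _⟩)
    · exact h
    · omega
  · intro h
    exact Or.inl ⟨ha, hj, h⟩

lemma part_of_one_parts (one : Finpartition (univ : Finset (Fin N)))
    (hone : one.parts = {univ}) (a : Fin N) : one.part a = univ :=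
  one.part_eq_of_mem (by rw [hone]; exact mem_singleton_self _) (mem_univ a)

lemma mergeRel_N (X : Finpartition (univ : Finset (Fin N)))
    (one : Finpartition (univ : Finset (Fin N))) (hone : one.parts = {univ}) :
    Finpartition.ofSetoid (mergeRel X N) = one := by
  refine Finpartition.eq_of_part_eq _ _ fun a _ => ?_
  ext j
  rw [Finpartition.mem_part_ofSetoid_iff_rel, part_of_one_parts one hone a]
  show ((a.val < N ∧ j.val < N) ∨ _) ↔ _
  simp [a.isLt, j.isLt]

lemma splitRel_zero (X : Finpartition (univ : Finset (Fin N)))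
    (one : Finpartition (univ : Finset (Fin N))) (hone : one.parts = {univ}) :
    Finpartition.ofSetoid (splitRel X 0) = one := by
  refine Finpartition.eq_of_part_eq _ _ fun a _ => ?_
  ext j
  rw [Finpartition.mem_part_ofSetoid_iff_rel, part_of_one_parts one hone a]
  show ((a.val < 0 ∧ _) ∨ (0 ≤ a.val ∧ 0 ≤ j.val)) ↔ _
  simp

lemma mergeRel_step (X : Finpartition (univ : Finset (Fin N))) (k : ℕ) (hk : k < N) :
    (Finpartition.ofSetoid (mergeRel X (k + 1))).avoid {(⟨k, hk⟩ : Fin N)} =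
      (Finpartition.ofSetoid (mergeRel X k)).avoid {(⟨k, hk⟩ : Fin N)} := by
  refine avoid_eq_of_rel _ _ _ fun i j hi hj => ?_
  have hi' : i.val ≠ k := fun h => hi (Fin.ext h)
  have hj' : j.val ≠ k := fun h => hj (Fin.ext h)
  rw [Finpartition.mem_part_ofSetoid_iff_rel, Finpartition.mem_part_ofSetoid_iff_rel]
  show ((i.val < k + 1 ∧ j.val < k + 1) ∨ (k + 1 ≤ i.val ∧ k + 1 ≤ j.val ∧ _)) ↔
    ((i.val < k ∧ j.val < k) ∨ (k ≤ i.val ∧ k ≤ j.val ∧ _))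
  constructor
  · rintro (⟨h1, h2⟩ | ⟨h1, h2, h3⟩)
    · exact Or.inl ⟨by omega, by omega⟩
    · exact Or.inr ⟨by omega, by omega, h3⟩
  · rintro (⟨h1, h2⟩ | ⟨h1, h2, h3⟩)
    · exact Or.inl ⟨by omega, by omega⟩
    · exact Or.inr ⟨by omega, by omega, h3⟩

lemma splitRel_step (X : Finpartition (univ : Finset (Fin N))) (k : ℕ) (hk : k < N) :
    (Finpartition.ofSetoid (splitRel X (k + 1))).avoid {(⟨k, hk⟩ : Fin N)} =
      (Finpartition.ofSetoid (splitRel X k)).avoid {(⟨k, hk⟩ : Fin N)} := by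
  refine avoid_eq_of_rel _ _ _ fun i j hi hj => ?_
  have hi' : i.val ≠ k := fun h => hi (Fin.ext h)
  have hj' : j.val ≠ k := fun h => hj (Fin.ext h)
  rw [Finpartition.mem_part_ofSetoid_iff_rel, Finpartition.mem_part_ofSetoid_iff_rel]
  show ((i.val < k + 1 ∧ j.val < k + 1 ∧ _) ∨ (k + 1 ≤ i.val ∧ k + 1 ≤ j.val)) ↔
    ((i.val < k ∧ j.val < k ∧ _) ∨ (k ≤ i.val ∧ k ≤ j.val))
  constructor
  · rintro (⟨h1, h2, h3⟩ | ⟨h1, h2⟩)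
    · exact Or.inl ⟨by omega, by omega, h3⟩
    · exact Or.inr ⟨by omega, by omega⟩
  · rintro (⟨h1, h2, h3⟩ | ⟨h1, h2⟩)
    · exact Or.inl ⟨by omega, by omega, h3⟩
    · exact Or.inr ⟨by omega, by omega⟩

end Chains

section MatrixAux

variable {S : Type*} [Fintype S] [DecidableEq S]

lemma listProd_nonneg (L : List (Matrix S S ℝ))
    (h : ∀ M ∈ L, ∀ x y, 0 ≤ M x y) : ∀ x y, 0 ≤ L.prod x y := by
  induction L with
  | nil =>
    intro x y
    simp only [List.prod_nil, Matrix.one_apply]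
    split <;> norm_num
  | cons M L ih =>
    intro x y
    rw [List.prod_cons, Matrix.mul_apply]
    refine Finset.sum_nonneg fun z _ => mul_nonneg (h M (List.mem_cons_self) x z) ?_
    exact ih (fun M' hM' => h M' (List.mem_cons_of_mem _ hM')) z y

lemma listProd_pos (L : List (Matrix S S ℝ)) (c : ℕ → S)
    (h0 : ∀ M ∈ L, ∀ x y, 0 ≤ M x y)
    (h : ∀ i (hi : i < L.length), 0 < (L.get ⟨i, hi⟩) (c i) (c (i + 1))) :
    0 < L.prod (c 0) (c L.length) := by
  induction L generalizing c with
  | nil => simp [Matrix.one_apply]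
  | cons M L ih =>
    rw [List.prod_cons, Matrix.mul_apply]
    have h0' : ∀ M' ∈ L, ∀ x y, 0 ≤ M' x y :=
      fun M' hM' => h0 M' (List.mem_cons_of_mem _ hM')
    refine Finset.sum_pos' (fun z _ => mul_nonneg (h0 M (List.mem_cons_self) _ _)
      (listProd_nonneg L h0' _ _)) ⟨c 1, mem_univ _, ?_⟩
    refine mul_pos ?_ ?_
    · exact h 0 (by simp)
    · have := ih (fun i => c (i + 1)) h0' (fun i hi => h (i + 1) (by simpa using Nat.succ_lt_succ hi))
      simpa using this

end MatrixAux

section KernelAux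

variable {N : ℕ} (p : Finpartition (univ : Finset (Fin N)) → ℝ)

lemma gibbsKernel_denom_pos (hp : ∀ π, 0 < p π) (n : Fin N)
    (π : Finpartition (univ : Finset (Fin N))) :
    0 < ∑ π'' ∈ Finset.univ.filter (fun π'' => π''.avoid {n} = π.avoid {n}), p π'' :=
  Finset.sum_pos (fun π'' _ => hp π'') ⟨π, by simp⟩

lemma gibbsKernel_nonneg (hp : ∀ π, 0 < p π) (n : Fin N)
    (π π' : Finpartition (univ : Finset (Fin N))) : 0 ≤ gibbsKernel p n π π' := by
  unfold gibbsKernel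
  split
  · exact div_nonneg (hp π').le (gibbsKernel_denom_pos p hp n π).le
  · exact le_refl 0

lemma gibbsKernel_pos (hp : ∀ π, 0 < p π) (n : Fin N)
    (π π' : Finpartition (univ : Finset (Fin N)))
    (h : π'.avoid {n} = π.avoid {n}) : 0 < gibbsKernel p n π π' := by
  unfold gibbsKernel
  rw [if_pos h]
  exact div_pos (hp π') (gibbsKernel_denom_pos p hp n π)

end KernelAux

/-- For a strictly positive target pmf `p` on partitions of `[N]`, the Gibbs-sweep kernel
`T` satisfies `T(X,X) > 0`, `T(X,𝟙) > 0` and `T(𝟙,X) > 0` for every partition `X`, where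
`𝟙` is the one-block partition; consequently `T²(X,Y) > 0` for all `X, Y`, so the chain is
irreducible and aperiodic. -/
theorem gibbsSweep_pos (N : ℕ) (hN : 0 < N)
    (p : Finpartition (univ : Finset (Fin N)) → ℝ)
    (hp : ∀ π, 0 < p π) (hsum : ∑ π, p π = 1)
    (one : Finpartition (univ : Finset (Fin N))) (hone : one.parts = {univ}) :
    (∀ X, 0 < gibbsSweep p X X ∧ 0 < gibbsSweep p X one ∧ 0 < gibbsSweep p one X) ∧
    (∀ X Y, 0 < (gibbsSweep p * gibbsSweep p) X Y) := by
  set L := List.ofFn fun n : Fin N => gibbsKernel p n with hL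
  have hlen : L.length = N := by simp [hL]
  have h0 : ∀ M ∈ L, ∀ x y, 0 ≤ M x y := by
    intro M hM x y
    rw [hL, List.mem_ofFn] at hM
    obtain ⟨n, rfl⟩ := hM
    exact gibbsKernel_nonneg p hp n x y
  have key : ∀ (c : ℕ → Finpartition (univ : Finset (Fin N))),
      (∀ k (hk : k < N), (c (k + 1)).avoid {(⟨k, hk⟩ : Fin N)} = (c k).avoid {(⟨k, hk⟩ : Fin N)}) →
      0 < gibbsSweep p (c 0) (c N) := by
    intro c hc
    have := listProd_pos L c h0 ?_
    · rwa [hlen] at this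
    · intro i hi
      have hi' : i < N := hlen ▸ hi
      have hget : L.get ⟨i, hi⟩ = gibbsKernel p ⟨i, hi'⟩ := by
        simp [hL, List.get_ofFn]
      rw [hget]
      exact gibbsKernel_pos p hp _ _ _ (hc i hi')
  have main : ∀ X, 0 < gibbsSweep p X X ∧ 0 < gibbsSweep p X one ∧ 0 < gibbsSweep p one X := by
    intro X
    refine ⟨?_, ?_, ?_⟩
    · exact key (fun _ => X) (fun k hk => rfl)
    · have := key (fun k => Finpartition.ofSetoid (mergeRel X k)) (fun k hk => mergeRel_step X k hk)
      beta_reduce at this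
      rwa [mergeRel_zero X, mergeRel_N X one hone] at this
    · have := key (fun k => Finpartition.ofSetoid (splitRel X k)) (fun k hk => splitRel_step X k hk)
      beta_reduce at this
      rwa [splitRel_zero X one hone, splitRel_N X] at this
  refine ⟨main, fun X Y => ?_⟩
  have hT0 : ∀ x y, 0 ≤ gibbsSweep p x y := listProd_nonneg L h0
  rw [Matrix.mul_apply]
  refine Finset.sum_pos' (fun z _ => mul_nonneg (hT0 _ _) (hT0 _ _)) ⟨one, mem_univ _, ?_⟩
  exact mul_pos (main X).2.1 (main Y).2.2
end
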